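/- Let n ≥ 1 and let S_n be the star graph on vertices {0,1,...,n-1}. The number of injective partial endomorphisms of S_n equals 3 + 3n² − 4n + Σ_{k=2}^{n-1} (C(n,k) + C(n-1,k))·C(n-1,k)·k!. -/

import Mathlib

def pmul {V : Type*} (f g : V → Option V) : V → Option V := fun x => (f x).bind g

def pdom {V : Type*} (f : V → Option V) : Set V := {x | f x ≠ none}

def pim {V : Type*} (f : V → Option V) : Set V := {y | ∃ x, f x = some y}

def pker {V : Type*} (f : V → Option V) : V → V → Prop := fun x y => f x ≠ none ∧ f x = f y

def PInj {V : Type*} (f : V → Option V) : Prop := ∀ u v a, f u = some a → f v = some a → u = v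

def edge {n : ℕ} (u v : Fin n) : Prop := (u.val = 0 ∧ v.val ≠ 0) ∨ (v.val = 0 ∧ u.val ≠ 0)

def IsPEnd {n : ℕ} (α : Fin n → Option (Fin n)) : Prop :=
  ∀ u v a b, α u = some a → α v = some b → edge u v → edge a b

def IsPwEnd {n : ℕ} (α : Fin n → Option (Fin n)) : Prop :=
  ∀ u v a b, α u = some a → α v = some b → edge u v → a ≠ b → edge a b

def IsPsEnd {n : ℕ} (α : Fin n → Option (Fin n)) : Prop :=
  ∀ u v a b, α u = some a → α v = some b → (edge u v ↔ edge a b)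

def IsPswEnd {n : ℕ} (α : Fin n → Option (Fin n)) : Prop :=
  ∀ u v a b, α u = some a → α v = some b → ((edge u v ∧ a ≠ b) ↔ edge a b)

def PEndS (n : ℕ) : Set (Fin n → Option (Fin n)) := {α | IsPEnd α}
def PwEndS (n : ℕ) : Set (Fin n → Option (Fin n)) := {α | IsPwEnd α}
def PsEndS (n : ℕ) : Set (Fin n → Option (Fin n)) := {α | IsPsEnd α}
def PswEndS (n : ℕ) : Set (Fin n → Option (Fin n)) := {α | IsPswEnd α}
def IEndS (n : ℕ) : Set (Fin n → Option (Fin n)) := {α | PInj α ∧ IsPEnd α}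
def PAutS (n : ℕ) : Set (Fin n → Option (Fin n)) := {α | PInj α ∧ IsPsEnd α}

def RegularIn {V : Type*} (M : Set (V → Option V)) (a : V → Option V) : Prop :=
  ∃ b ∈ M, pmul (pmul a b) a = a

def GreenL {V : Type*} (M : Set (V → Option V)) (a b : V → Option V) : Prop :=
  (∃ g ∈ M, a = pmul g b) ∧ (∃ g ∈ M, b = pmul g a)

def GreenR {V : Type*} (M : Set (V → Option V)) (a b : V → Option V) : Prop :=
  (∃ g ∈ M, a = pmul b g) ∧ (∃ g ∈ M, b = pmul a g)

def GreenH {V : Type*} (M : Set (V → Option V)) (a b : V → Option V) : Prop :=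
  GreenL M a b ∧ GreenR M a b

def GreenJ {V : Type*} (M : Set (V → Option V)) (a b : V → Option V) : Prop :=
  (∃ g ∈ M, ∃ h ∈ M, a = pmul (pmul g b) h) ∧ (∃ g ∈ M, ∃ h ∈ M, b = pmul (pmul g a) h)


set_option linter.unusedSectionVars false
set_option linter.unusedTactic false

def PInjF {α β : Type*} (f : α → Option β) : Prop :=
  ∀ u v a, f u = some a → f v = some a → u = v

section Generic
variable {α β : Type*} [Fintype α] [DecidableEq α] [Fintype β] [DecidableEq β]

def pdomF (f : α → Option β) : Finset α := Finset.univ.filter (fun x => (f x).isSome)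

lemma mem_pdomF {f : α → Option β} {x : α} : x ∈ pdomF f ↔ (f x).isSome := by
  simp [pdomF]

noncomputable def fiberEquiv (s : Finset α) :
    {g : {f : α → Option β // PInjF f} // pdomF g.1 = s} ≃ ({x // x ∈ s} ↪ β) where
  toFun g := ⟨fun x => (g.1.1 x.1).get (by
      obtain ⟨x, hx⟩ := x; rw [← g.2, mem_pdomF] at hx; exact hx),
    by
      rintro ⟨u, hu⟩ ⟨v, hv⟩ h
      dsimp only at h
      have hu' : (g.1.1 u).isSome := by rw [← mem_pdomF, g.2]; exact hu
      have hv' : (g.1.1 v).isSome := by rw [← mem_pdomF, g.2]; exact hv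
      exact Subtype.ext (g.1.2 u v ((g.1.1 u).get hu') (Option.some_get hu').symm
        ((Option.some_get hv').symm.trans (congrArg some h.symm)))⟩
  invFun e := ⟨⟨fun x => if h : x ∈ s then some (e ⟨x, h⟩) else none, by
      intro u v a hu hv
      by_cases h1 : u ∈ s
      · by_cases h2 : v ∈ s
        · simp only [dif_pos h1] at hu
          simp only [dif_pos h2] at hv
          have : e ⟨u, h1⟩ = e ⟨v, h2⟩ := by
            rw [Option.some_inj] at hu hv; rw [hu, hv]
          exact congrArg Subtype.val (e.injective this)
        · simp [dif_neg h2] at hv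
      · simp [dif_neg h1] at hu⟩, by
      ext x
      rw [mem_pdomF]
      by_cases h : x ∈ s <;> simp [h]⟩
  left_inv g := by
    apply Subtype.ext; apply Subtype.ext; funext x
    by_cases h : x ∈ s
    · simp only [dif_pos h]
      exact Option.some_get _
    · simp only [dif_neg h]
      have : x ∉ pdomF g.1.1 := by rw [g.2]; exact h
      rw [mem_pdomF] at this
      exact (Option.not_isSome_iff_eq_none.mp this).symm
  right_inv e := by
    ext x
    have h : x.1 ∈ s := x.2
    simp [dif_pos h]

lemma card_pinj :
    Nat.card {f : α → Option β // PInjF f} =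
      ∑ k ∈ Finset.range (Fintype.card α + 1),
        (Fintype.card α).choose k * (Fintype.card β).descFactorial k := by
  classical
  rw [← Nat.card_congr (Equiv.sigmaFiberEquiv (fun g : {f : α → Option β // PInjF f} => pdomF g.1))]
  rw [Nat.card_eq_fintype_card, Fintype.card_sigma]
  have h1 : ∀ s : Finset α,
      Fintype.card {g : {f : α → Option β // PInjF f} // pdomF g.1 = s} =
        (Fintype.card β).descFactorial s.card := by
    intro s
    rw [Fintype.card_congr (fiberEquiv s), Fintype.card_embedding_eq, Fintype.card_coe]
  simp_rw [h1]
  rw [← Finset.powerset_univ, Finset.sum_powerset_apply_card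
    (fun k => (Fintype.card β).descFactorial k)]
  simp [Finset.card_univ, mul_comm]

end Generic

section Star
variable {m : ℕ}

lemma edge_zero_succ (x : Fin m) : edge (0 : Fin (m+1)) x.succ :=
  Or.inl ⟨rfl, by simp [Fin.val_succ]⟩

lemma edge_succ_zero (x : Fin m) : edge x.succ (0 : Fin (m+1)) :=
  Or.inr ⟨rfl, by simp [Fin.val_succ]⟩

lemma not_edge_succ_succ (x y : Fin m) : ¬ edge x.succ y.succ := by
  rintro (⟨h, -⟩ | ⟨h, -⟩) <;> simp [Fin.val_succ] at h

lemma not_edge_zero_zero : ¬ edge (0 : Fin (m+1)) 0 := by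
  rintro (⟨-, h⟩ | ⟨-, h⟩) <;> simp at h

lemma eq_zero_of_edge_succ {y : Fin m} {b : Fin (m+1)} (h : edge y.succ b) : b = 0 := by
  rcases h with ⟨h, -⟩ | ⟨h, -⟩
  · exact absurd h (by simp [Fin.val_succ])
  · exact Fin.ext h

lemma ne_zero_of_edge_zero {b : Fin (m+1)} (h : edge (0 : Fin (m+1)) b) : b ≠ 0 := by
  rcases h with ⟨-, h⟩ | ⟨h, h'⟩
  · exact fun hb => h (by simp [hb])
  · exact absurd rfl h'

lemma exists_succ {b : Fin (m+1)} (h : b ≠ 0) : ∃ b', b = Fin.succ b' := by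
  induction b using Fin.cases with
  | zero => exact absurd rfl h
  | succ b' => exact ⟨b', rfl⟩

def extNone (f : Fin m → Option (Fin (m+1))) : Fin (m+1) → Option (Fin (m+1)) :=
  Fin.cases none f

def extZero (f : Fin m → Option (Fin m)) : Fin (m+1) → Option (Fin (m+1)) :=
  Fin.cases (some 0) (fun x => (f x).map Fin.succ)

def extStar (y : Fin m) (f : Fin m → Option (Fin 1)) : Fin (m+1) → Option (Fin (m+1)) :=
  Fin.cases (some y.succ) (fun x => (f x).map (fun _ => 0))

@[simp] lemma extNone_zero (f : Fin m → Option (Fin (m+1))) : extNone f 0 = none :=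
  Fin.cases_zero ..
@[simp] lemma extNone_succ (f : Fin m → Option (Fin (m+1))) (x : Fin m) :
    extNone f x.succ = f x := Fin.cases_succ ..
@[simp] lemma extZero_zero (f : Fin m → Option (Fin m)) : extZero f 0 = some 0 :=
  Fin.cases_zero ..
@[simp] lemma extZero_succ (f : Fin m → Option (Fin m)) (x : Fin m) :
    extZero f x.succ = (f x).map Fin.succ := Fin.cases_succ ..
@[simp] lemma extStar_zero (y : Fin m) (f : Fin m → Option (Fin 1)) :
    extStar y f 0 = some y.succ := Fin.cases_zero ..
@[simp] lemma extStar_succ (y : Fin m) (f : Fin m → Option (Fin 1)) (x : Fin m) :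
    extStar y f x.succ = (f x).map (fun _ => 0) := Fin.cases_succ ..

lemma extNone_mem {f : Fin m → Option (Fin (m+1))} (hf : PInjF f) : extNone f ∈ IEndS (m+1) := by
  constructor
  · intro u v a hu hv
    induction u using Fin.cases with
    | zero => simp at hu
    | succ u' =>
      induction v using Fin.cases with
      | zero => simp at hv
      | succ v' =>
        rw [extNone_succ] at hu hv
        exact congrArg Fin.succ (hf u' v' a hu hv)
  · intro u v a b hu hv he
    induction u using Fin.cases with
    | zero => simp at hu
    | succ u' =>
      induction v using Fin.cases with
      | zero => simp at hv
      | succ v' => exact absurd he (not_edge_succ_succ u' v')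

lemma extZero_mem {f : Fin m → Option (Fin m)} (hf : PInjF f) : extZero f ∈ IEndS (m+1) := by
  constructor
  · intro u v a hu hv
    induction u using Fin.cases with
    | zero =>
      induction v using Fin.cases with
      | zero => rfl
      | succ v' =>
        rw [extZero_zero, Option.some_inj] at hu
        rw [extZero_succ] at hv
        rcases Option.map_eq_some_iff.mp hv with ⟨b', -, hb'⟩
        exact absurd (hu.trans hb'.symm) (Fin.succ_ne_zero b').symm
    | succ u' =>
      induction v using Fin.cases with
      | zero =>
        rw [extZero_zero, Option.some_inj] at hv
        rw [extZero_succ] at hu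
        rcases Option.map_eq_some_iff.mp hu with ⟨b', -, hb'⟩
        exact absurd (hv.trans hb'.symm) (Fin.succ_ne_zero b').symm
      | succ v' =>
        rw [extZero_succ] at hu hv
        rcases Option.map_eq_some_iff.mp hu with ⟨a', ha', ha2⟩
        rcases Option.map_eq_some_iff.mp hv with ⟨b', hb', hb2⟩
        have : a' = b' := Fin.succ_injective m (ha2.trans hb2.symm)
        exact congrArg Fin.succ (hf u' v' a' ha' (this ▸ hb'))
  · intro u v a b hu hv he
    induction u using Fin.cases with
    | zero =>
      induction v using Fin.cases with
      | zero => exact absurd he not_edge_zero_zero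
      | succ v' =>
        rw [extZero_zero, Option.some_inj] at hu
        rw [extZero_succ] at hv
        rcases Option.map_eq_some_iff.mp hv with ⟨b', -, hb'⟩
        rw [← hu, ← hb']
        exact edge_zero_succ b'
    | succ u' =>
      induction v using Fin.cases with
      | zero =>
        rw [extZero_zero, Option.some_inj] at hv
        rw [extZero_succ] at hu
        rcases Option.map_eq_some_iff.mp hu with ⟨a', -, ha'⟩
        rw [← hv, ← ha']
        exact edge_succ_zero a'
      | succ v' => exact absurd he (not_edge_succ_succ u' v')

lemma extStar_mem (y : Fin m) {f : Fin m → Option (Fin 1)} (hf : PInjF f) :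
    extStar y f ∈ IEndS (m+1) := by
  constructor
  · intro u v a hu hv
    induction u using Fin.cases with
    | zero =>
      induction v using Fin.cases with
      | zero => rfl
      | succ v' =>
        rw [extStar_zero, Option.some_inj] at hu
        rw [extStar_succ] at hv
        rcases Option.map_eq_some_iff.mp hv with ⟨b', -, hb'⟩
        exact absurd (hb'.trans hu.symm) (Fin.succ_ne_zero y).symm
    | succ u' =>
      induction v using Fin.cases with
      | zero =>
        rw [extStar_zero, Option.some_inj] at hv
        rw [extStar_succ] at hu
        rcases Option.map_eq_some_iff.mp hu with ⟨a', -, ha'⟩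
        exact absurd (ha'.trans hv.symm) (Fin.succ_ne_zero y).symm
      | succ v' =>
        rw [extStar_succ] at hu hv
        rcases Option.map_eq_some_iff.mp hu with ⟨a', ha', -⟩
        rcases Option.map_eq_some_iff.mp hv with ⟨b', hb', -⟩
        have : a' = b' := Subsingleton.elim a' b'
        exact congrArg Fin.succ (hf u' v' a' ha' (this ▸ hb'))
  · intro u v a b hu hv he
    induction u using Fin.cases with
    | zero =>
      induction v using Fin.cases with
      | zero => exact absurd he not_edge_zero_zero
      | succ v' =>
        rw [extStar_zero, Option.some_inj] at hu
        rw [extStar_succ] at hv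
        rcases Option.map_eq_some_iff.mp hv with ⟨b', -, hb'⟩
        rw [← hu, ← hb']
        exact edge_succ_zero y
    | succ u' =>
      induction v using Fin.cases with
      | zero =>
        rw [extStar_zero, Option.some_inj] at hv
        rw [extStar_succ] at hu
        rcases Option.map_eq_some_iff.mp hu with ⟨a', -, ha'⟩
        rw [← hv, ← ha']
        exact edge_zero_succ y
      | succ v' => exact absurd he (not_edge_succ_succ u' v')

abbrev N1 (m : ℕ) := {f : Fin m → Option (Fin (m+1)) // PInjF f}
abbrev N2 (m : ℕ) := {f : Fin m → Option (Fin m) // PInjF f}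
abbrev N3 (m : ℕ) := {f : Fin m → Option (Fin 1) // PInjF f}

def bigMap (m : ℕ) : N1 m ⊕ N2 m ⊕ (Fin m × N3 m) → IEndS (m+1)
  | Sum.inl f => ⟨extNone f.1, extNone_mem f.2⟩
  | Sum.inr (Sum.inl f) => ⟨extZero f.1, extZero_mem f.2⟩
  | Sum.inr (Sum.inr (y, f)) => ⟨extStar y f.1, extStar_mem y f.2⟩

lemma bigMap_bijective (m : ℕ) : Function.Bijective (bigMap m) := by
  constructor
  · rintro (⟨f, hf⟩ | ⟨f, hf⟩ | ⟨y, f, hf⟩) (⟨g, hg⟩ | ⟨g, hg⟩ | ⟨y', g, hg⟩) h <;>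
      (try rfl) <;>
      simp only [bigMap, Subtype.mk.injEq] at h
    · exact congrArg Sum.inl (Subtype.ext (funext fun x => by
        have := congrFun h x.succ; simpa using this))
    · have := congrFun h 0; simp at this
    · have := congrFun h 0
      simp only [extNone_zero, extStar_zero] at this
      exact absurd this.symm (by simp)
    · have := congrFun h 0; simp at this
    · refine congrArg (fun t => Sum.inr (Sum.inl t)) (Subtype.ext (funext fun x => ?_))
      have hx := congrFun h x.succ
      simp only [extZero_succ] at hx
      exact Option.map_injective (Fin.succ_injective m) hx
    · have := congrFun h 0
      simp only [extZero_zero, extStar_zero, Option.some_inj] at this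
      exact absurd this.symm (Fin.succ_ne_zero y')
    · have := congrFun h 0
      simp only [extNone_zero, extStar_zero] at this
      exact absurd this (by simp)
    · have := congrFun h 0
      simp only [extZero_zero, extStar_zero, Option.some_inj] at this
      exact absurd this (Fin.succ_ne_zero y)
    · have h0 := congrFun h 0
      simp only [extStar_zero, Option.some_inj] at h0
      have hy : y = y' := Fin.succ_injective m h0
      subst hy
      refine congrArg (fun t => Sum.inr (Sum.inr (y, t))) (Subtype.ext (funext fun x => ?_))
      have hx := congrFun h x.succ
      simp only [extStar_succ] at hx
      exact Option.map_injective (fun a b _ => Subsingleton.elim a b) hx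
  · rintro ⟨α, hinj, hend⟩
    rcases hα : α 0 with - | a
    · refine ⟨Sum.inl ⟨fun x => α x.succ, ?_⟩, ?_⟩
      · intro u v b hu hv
        exact Fin.succ_injective m (hinj u.succ v.succ b hu hv)
      · apply Subtype.ext
        funext u
        induction u using Fin.cases with
        | zero => show extNone (fun x => α x.succ) 0 = α 0; rw [extNone_zero, hα]
        | succ u' => rfl
    · induction a using Fin.cases with
      | zero =>
        have key : ∀ (x : Fin m) (b : Fin (m+1)), α x.succ = some b → b ≠ 0 := by
          intro x b hb hb0
          have := hend 0 x.succ 0 b hα hb (edge_zero_succ x)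
          exact ne_zero_of_edge_zero (hb0 ▸ this) hb0
        refine ⟨Sum.inr (Sum.inl ⟨fun x => (α x.succ).bind (Fin.cases none some), ?_⟩), ?_⟩
        · intro u v c hu hv
          dsimp only at hu hv
          have hu' : α u.succ = some c.succ := by
            rcases hx : α u.succ with - | b
            · rw [hx] at hu; simp at hu
            · rw [hx] at hu
              simp only [Option.bind_some] at hu
              induction b using Fin.cases with
              | zero => simp at hu
              | succ b' =>
                rw [Fin.cases_succ, Option.some_inj] at hu
                rw [hu]
          have hv' : α v.succ = some c.succ := by
            rcases hx : α v.succ with - | b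
            · rw [hx] at hv; simp at hv
            · rw [hx] at hv
              simp only [Option.bind_some] at hv
              induction b using Fin.cases with
              | zero => simp at hv
              | succ b' =>
                rw [Fin.cases_succ, Option.some_inj] at hv
                rw [hv]
          exact Fin.succ_injective m (hinj u.succ v.succ c.succ hu' hv')
        · apply Subtype.ext
          funext u
          induction u using Fin.cases with
          | zero => show extZero (fun x => (α x.succ).bind (Fin.cases none some)) 0 = α 0; rw [extZero_zero, hα]
          | succ u' =>
            simp only [bigMap, extZero_succ]
            rcases hx : α u'.succ with - | b
            · simp
            · rcases exists_succ (key u' b hx) with ⟨b', rfl⟩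
              simp
      | succ y =>
        have key : ∀ (x : Fin m) (b : Fin (m+1)), α x.succ = some b → b = 0 := by
          intro x b hb
          exact eq_zero_of_edge_succ (hend 0 x.succ y.succ b hα hb (edge_zero_succ x))
        refine ⟨Sum.inr (Sum.inr (y, ⟨fun x => (α x.succ).map (fun _ => 0), ?_⟩)), ?_⟩
        · intro u v c hu hv
          dsimp only at hu hv
          rcases hx : α u.succ with - | b
          · rw [hx] at hu; simp at hu
          · rcases hx' : α v.succ with - | b'
            · rw [hx'] at hv; simp at hv
            · have hb := key u b hx
              have hb' := key v b' hx'
              subst hb; subst hb'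
              exact Fin.succ_injective m (hinj u.succ v.succ 0 hx hx')
        · apply Subtype.ext
          funext u
          induction u using Fin.cases with
          | zero => show extStar y (fun x => (α x.succ).map (fun _ => 0)) 0 = α 0; rw [extStar_zero, hα]
          | succ u' =>
            simp only [bigMap, extStar_succ]
            rcases hx : α u'.succ with - | b
            · simp
            · have := key u' b hx
              subst this
              simp

end Star


def PInjF' {α β : Type*} (f : α → Option β) : Prop :=
  ∀ u v a, f u = some a → f v = some a → u = v

lemma sum_d1 (m : ℕ) :
    ∑ k ∈ Finset.range (m + 1), m.choose k * Nat.descFactorial 1 k = m + 1 := by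
  rcases m with _ | m'
  · simp
  · rw [Finset.range_eq_Ico, ← Finset.sum_Ico_consecutive _ (by omega : 0 ≤ 2) (by omega : 2 ≤ m' + 1 + 1)]
    have h2 : ∑ k ∈ Finset.Ico 2 (m' + 1 + 1), (m' + 1).choose k * Nat.descFactorial 1 k = 0 := by
      apply Finset.sum_eq_zero
      intro k hk
      rw [Finset.mem_Ico] at hk
      rw [Nat.descFactorial_eq_zero_iff_lt.mpr (by omega), mul_zero]
    rw [h2, add_zero]
    show ∑ k ∈ Finset.range 2, _ = _
    rw [Finset.sum_range_succ, Finset.sum_range_one]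
    simp [Nat.choose_one_right]
    omega

lemma final_arith (m : ℕ) :
    (∑ k ∈ Finset.range (m + 1), m.choose k * Nat.descFactorial (m + 1) k) +
      ((∑ k ∈ Finset.range (m + 1), m.choose k * Nat.descFactorial m k) +
        m * (m + 1)) =
      3 + 3 * (m + 1) ^ 2 - 4 * (m + 1) +
        ∑ k ∈ Finset.Icc 2 m,
          ((m + 1).choose k + m.choose k) * m.choose k * Nat.factorial k := by
  have hT : ∀ k, m.choose k * Nat.descFactorial (m + 1) k + m.choose k * Nat.descFactorial m k
      = ((m + 1).choose k + m.choose k) * m.choose k * Nat.factorial k := by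
    intro k
    rw [Nat.descFactorial_eq_factorial_mul_choose, Nat.descFactorial_eq_factorial_mul_choose]
    ring
  have hsum : (∑ k ∈ Finset.range (m + 1), m.choose k * Nat.descFactorial (m + 1) k) +
      (∑ k ∈ Finset.range (m + 1), m.choose k * Nat.descFactorial m k) =
      ∑ k ∈ Finset.range (m + 1), ((m + 1).choose k + m.choose k) * m.choose k * Nat.factorial k := by
    rw [← Finset.sum_add_distrib]
    exact Finset.sum_congr rfl fun k _ => hT k
  rw [← add_assoc, hsum]
  rcases m with _ | m'
  · simp
  · set m := m' + 1 with hm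
    have hsplit : ∑ k ∈ Finset.range (m + 1), ((m + 1).choose k + m.choose k) * m.choose k * Nat.factorial k
        = (∑ k ∈ Finset.range 2, ((m + 1).choose k + m.choose k) * m.choose k * Nat.factorial k)
          + ∑ k ∈ Finset.Icc 2 m, ((m + 1).choose k + m.choose k) * m.choose k * Nat.factorial k := by
      rw [Finset.range_eq_Ico, ← Finset.sum_Ico_consecutive _ (by omega : 0 ≤ 2) (by omega : 2 ≤ m + 1)]
      simp only [Finset.Ico_add_one_right_eq_Icc, Finset.range_eq_Ico]
    rw [hsplit]
    rw [Finset.sum_range_succ, Finset.sum_range_one]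
    simp only [Nat.choose_zero_right, Nat.choose_one_right, Nat.factorial_zero, Nat.factorial_one]
    have h4 : 4 * (m + 1) ≤ 3 + 3 * (m + 1) ^ 2 := by nlinarith
    set S := ∑ k ∈ Finset.Icc 2 m, ((m + 1).choose k + m.choose k) * m.choose k * Nat.factorial k
    zify [h4]
    ring


theorem stmt9 (n : ℕ) (hn : 1 ≤ n) :
    (IEndS n).ncard =
      3 + 3 * n ^ 2 - 4 * n +
        ∑ k ∈ Finset.Icc 2 (n - 1),
          (Nat.choose n k + Nat.choose (n - 1) k) * Nat.choose (n - 1) k * Nat.factorial k := by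
  obtain ⟨m, rfl⟩ : ∃ m, n = m + 1 := ⟨n - 1, by omega⟩
  rw [← Nat.card_coe_set_eq]
  have hcard : Nat.card (IEndS (m + 1)) =
      Nat.card (N1 m) + (Nat.card (N2 m) + Nat.card (Fin m × N3 m)) := by
    rw [← Nat.card_congr (Equiv.ofBijective _ (bigMap_bijective m)), Nat.card_sum, Nat.card_sum]
  rw [hcard, Nat.card_prod]
  have h1 : Nat.card (N1 m) =
      ∑ k ∈ Finset.range (m + 1), m.choose k * Nat.descFactorial (m + 1) k := by
    rw [card_pinj]; simp
  have h2 : Nat.card (N2 m) =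
      ∑ k ∈ Finset.range (m + 1), m.choose k * Nat.descFactorial m k := by
    rw [card_pinj]; simp
  have h3 : Nat.card (N3 m) =
      ∑ k ∈ Finset.range (m + 1), m.choose k * Nat.descFactorial 1 k := by
    rw [card_pinj]; simp
  rw [h1, h2, h3, sum_d1, Nat.card_eq_fintype_card, Fintype.card_fin]
  simpa using final_arith m
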